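/- If F is a free ultrafilter on ω, then the space N_F does not have the bounded Josefson–Nissenzweig property. -/
import Mathlib


open Filter Topology

noncomputable section

/-- The topology of the space `N_F = ω ∪ {p_F}` on `Option α`, where `none` plays the
role of the point `p_F`: every `some a` is isolated, and neighborhoods of `none`
are the sets `A ∪ {p_F}` with `A ∈ F`. -/
def NFtop {α : Type*} (F : Filter α) : TopologicalSpace (Option α) where
  IsOpen U := none ∈ U → {a : α | some a ∈ U} ∈ F
  isOpen_univ := fun _ => Filter.univ_mem
  isOpen_inter := fun U V hU hV h => F.inter_sets (hU h.1) (hV h.2)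
  isOpen_sUnion := fun S hS h => by
    obtain ⟨U, hU, hnU⟩ := h
    exact Filter.mem_of_superset (hS U hU hnU) fun a ha => ⟨U, hU, ha⟩

/-- The norm `‖μ‖ = Σ |α_i|` of a finitely supported signed measure. -/
def mnorm {X : Type*} (μ : X →₀ ℝ) : ℝ := ∑ x ∈ μ.support, |μ x|

/-- The integral `μ(f) = Σ α_i f(x_i)`. -/
def mIntg {X : Type*} (μ : X →₀ ℝ) (f : X → ℝ) : ℝ := ∑ x ∈ μ.support, μ x * f x

/-- The norm of the restriction `μ ↾ A`. -/
def mnormOn {X : Type*} (μ : X →₀ ℝ) (A : Set X) : ℝ :=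
  ∑ x ∈ μ.support, Set.indicator A (fun y => |μ y|) x

/-- The value `μ(A)` of a finitely supported signed measure on a set. -/
def msetOf {X : Type*} (μ : X →₀ ℝ) (A : Set X) : ℝ :=
  ∑ x ∈ μ.support, Set.indicator A (fun y => μ y) x

/-- A JN-sequence on `X` (with topology `t`). -/
def IsJNSeq {X : Type*} (t : TopologicalSpace X) (μ : ℕ → (X →₀ ℝ)) : Prop :=
  (∀ n, mnorm (μ n) = 1) ∧
  ∀ f : X → ℝ, @Continuous X ℝ t _ f →
    Tendsto (fun n => mIntg (μ n) f) atTop (nhds 0)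

/-- A BJN-sequence on `X` (with topology `t`). -/
def IsBJNSeq {X : Type*} (t : TopologicalSpace X) (μ : ℕ → (X →₀ ℝ)) : Prop :=
  (∀ n, mnorm (μ n) = 1) ∧
  ∀ f : X → ℝ, @Continuous X ℝ t _ f → (∃ C : ℝ, ∀ x, |f x| ≤ C) →
    Tendsto (fun n => mIntg (μ n) f) atTop (nhds 0)

/-- The Josefson–Nissenzweig property. -/
def JNP {X : Type*} (t : TopologicalSpace X) : Prop := ∃ μ, IsJNSeq t μ

/-- The bounded Josefson–Nissenzweig property. -/
def BJNP {X : Type*} (t : TopologicalSpace X) : Prop := ∃ μ, IsBJNSeq t μ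

/-- A free filter: a proper filter containing all cofinite sets. -/
def IsFreeFilter {α : Type*} (F : Filter α) : Prop := F.NeBot ∧ F ≤ Filter.cofinite

/-- Katětov preorder: `F ≤_K G`. -/
def KatetovLE (F G : Filter ℕ) : Prop := ∃ f : ℕ → ℕ, ∀ A ∈ F, f ⁻¹' A ∈ G

open Finset
open scoped Classical

def ssupp (μ : Option ℕ →₀ ℝ) : Finset ℕ :=
  μ.support.preimage some (Set.injOn_of_injective (Option.some_injective ℕ))

lemma mem_ssupp (μ : Option ℕ →₀ ℝ) (j : ℕ) : j ∈ ssupp μ ↔ μ (some j) ≠ 0 := by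
  simp [ssupp, Finset.mem_preimage, Finsupp.mem_support_iff]

lemma sum_support_option (μ : Option ℕ →₀ ℝ) (g : Option ℕ → ℝ)
    (hg : ∀ x, μ x = 0 → g x = 0) :
    ∑ x ∈ μ.support, g x = g none + ∑ j ∈ ssupp μ, g (some j) := by
  have hsplit := Finset.sum_filter_add_sum_filter_not μ.support (· = none) g
  have h1 : ∑ x ∈ μ.support.filter (· = none), g x = g none := by
    by_cases hn : none ∈ μ.support
    · have : μ.support.filter (· = none) = {none} := by
        ext x; simp only [Finset.mem_filter, Finset.mem_singleton]
        constructor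
        · rintro ⟨_, rfl⟩; rfl
        · rintro rfl; exact ⟨hn, rfl⟩
      rw [this, Finset.sum_singleton]
    · have h0 : μ none = 0 := by simpa [Finsupp.mem_support_iff] using hn
      have : μ.support.filter (· = none) = ∅ := by
        ext x; simp only [Finset.mem_filter, Finset.notMem_empty, iff_false]
        rintro ⟨hx, rfl⟩; exact hn hx
      rw [this, Finset.sum_empty, hg none h0]
  have h2 : ∑ x ∈ μ.support.filter (¬ · = none), g x = ∑ j ∈ ssupp μ, g (some j) := by
    rw [show μ.support.filter (¬ · = none) = (ssupp μ).map ⟨some, Option.some_injective ℕ⟩ by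
      ext x; cases x <;> simp [mem_ssupp, Finsupp.mem_support_iff]]
    rw [Finset.sum_map]; rfl
  rw [← hsplit, h1, h2]

lemma mnorm_eq (μ : Option ℕ →₀ ℝ) :
    mnorm μ = |μ none| + ∑ j ∈ ssupp μ, |μ (some j)| :=
  sum_support_option μ (fun x => |μ x|) (fun x hx => by simp [hx])

def sval (μ : Option ℕ →₀ ℝ) (S : Set ℕ) : ℝ :=
  ∑ j ∈ (ssupp μ).filter (· ∈ S), μ (some j)
lemma mIntg_eq (μ : Option ℕ →₀ ℝ) (f : Option ℕ → ℝ) :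
    mIntg μ f = μ none * f none + ∑ j ∈ ssupp μ, μ (some j) * f (some j) :=
  sum_support_option μ (fun x => μ x * f x) (fun x hx => by simp [hx])

lemma sval_singleton (μ : Option ℕ →₀ ℝ) (j : ℕ) : sval μ {j} = μ (some j) := by
  unfold sval
  rw [Finset.sum_filter]
  simp only [Set.mem_singleton_iff]
  rw [Finset.sum_ite_eq' (ssupp μ) j (fun j' => μ (some j'))]
  split_ifs with h
  · rfl
  · exact (not_not.mp (fun hne => h ((mem_ssupp μ j).mpr hne))).symm

lemma abs_sval_le (μ : Option ℕ →₀ ℝ) (S : Set ℕ) :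
    |sval μ S| ≤ ∑ j ∈ ssupp μ, |μ (some j)| := by
  calc |sval μ S| ≤ ∑ j ∈ (ssupp μ).filter (· ∈ S), |μ (some j)| :=
        Finset.abs_sum_le_sum_abs _ _
    _ ≤ ∑ j ∈ ssupp μ, |μ (some j)| :=
        Finset.sum_le_sum_of_subset_of_nonneg (Finset.filter_subset _ _)
          (fun _ _ _ => abs_nonneg _)

/-- The characteristic function of `S ∪ {p}` (or `S`) is continuous on `N_U`. -/
lemma key1 (U : Ultrafilter ℕ) (μ : ℕ → (Option ℕ →₀ ℝ))
    (htend : ∀ f : Option ℕ → ℝ, @Continuous (Option ℕ) ℝ (NFtop (U : Filter ℕ)) _ f →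
      (∃ C : ℝ, ∀ x, |f x| ≤ C) → Tendsto (fun n => mIntg (μ n) f) atTop (nhds 0))
    (S : Set ℕ) :
    Tendsto (fun n => sval (μ n) S +
      (if S ∈ (U : Filter ℕ) then μ n none else 0)) atTop (nhds 0) := by
  set f : Option ℕ → ℝ := fun x =>
    x.elim (if S ∈ (U : Filter ℕ) then (1:ℝ) else 0) (fun j => if j ∈ S then (1:ℝ) else 0)
    with hf
  have hcont : @Continuous (Option ℕ) ℝ (NFtop (U : Filter ℕ)) _ f := by
    letI : TopologicalSpace (Option ℕ) := NFtop (U : Filter ℕ)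
    rw [continuous_def]
    intro V hV
    show none ∈ f ⁻¹' V → {a : ℕ | some a ∈ f ⁻¹' V} ∈ (U : Filter ℕ)
    intro hn
    by_cases hS : S ∈ (U : Filter ℕ)
    · refine Filter.mem_of_superset hS (fun a ha => ?_)
      have : f (some a) = 1 := by simp [hf, ha]
      have h1 : (1:ℝ) ∈ V := by simpa [hf, hS] using hn
      simpa [this] using h1
    · have hc : Sᶜ ∈ (U : Filter ℕ) := Ultrafilter.compl_mem_iff_notMem.mpr hS
      refine Filter.mem_of_superset hc (fun a ha => ?_)
      have ha' : a ∉ S := ha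
      have : f (some a) = 0 := by simp [hf, ha']
      have h0 : (0:ℝ) ∈ V := by simpa [hf, hS] using hn
      simpa [this] using h0
  have hbdd : ∃ C : ℝ, ∀ x, |f x| ≤ C := by
    refine ⟨1, fun x => ?_⟩
    cases x <;> simp [hf] <;> split_ifs <;> norm_num
  have := htend f hcont hbdd
  have heq : (fun n => mIntg (μ n) f) = fun n =>
      sval (μ n) S + (if S ∈ (U : Filter ℕ) then μ n none else 0) := by
    funext n
    rw [mIntg_eq]
    have h1 : μ n none * f none = (if S ∈ (U : Filter ℕ) then μ n none else 0) := by
      simp only [hf, Option.elim]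
      split_ifs <;> ring
    have h2 : ∑ j ∈ ssupp (μ n), μ n (some j) * f (some j) = sval (μ n) S := by
      unfold sval
      rw [Finset.sum_filter]
      refine Finset.sum_congr rfl (fun j _ => ?_)
      simp only [hf, Option.elim]
      split_ifs <;> ring
    rw [h1, h2]; ring
  rwa [heq] at this

section Chain
variable (s : ℕ → Finset ℕ) (P : ℕ → Finset ℕ → Prop)
  (H : ∀ (G : Finset ℕ) (N : ℕ), ∃ n, N ≤ n ∧ P n G)

/-- Recursively chosen indices together with the cumulative union of supports. -/
def chain : ℕ → ℕ × Finset ℕ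
  | 0 => ((H ∅ 0).choose, s (H ∅ 0).choose)
  | k+1 =>
    let p := chain k
    ((H p.2 (p.1+1)).choose, p.2 ∪ s (H p.2 (p.1+1)).choose)

lemma chain_P (k : ℕ) : P (chain s P H (k+1)).1 (chain s P H k).2 :=
  (H (chain s P H k).2 ((chain s P H k).1 + 1)).choose_spec.2

lemma chain_P0 : P (chain s P H 0).1 ∅ := (H ∅ 0).choose_spec.2

lemma chain_lt (k : ℕ) : (chain s P H k).1 < (chain s P H (k+1)).1 :=
  Nat.lt_of_succ_le (H (chain s P H k).2 ((chain s P H k).1 + 1)).choose_spec.1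

lemma chain_strictMono : StrictMono (fun k => (chain s P H k).1) :=
  strictMono_nat_of_lt_succ (chain_lt s P H)

lemma chain_supp_subset (k : ℕ) : s ((chain s P H k).1) ⊆ (chain s P H k).2 := by
  cases k with
  | zero => exact Finset.Subset.refl _
  | succ k => exact Finset.subset_union_right

lemma chain_F_mono : Monotone (fun k => (chain s P H k).2) := by
  refine monotone_nat_of_le_succ (fun k => ?_)
  exact Finset.subset_union_left

end Chain

lemma tv_tendsto (U : Ultrafilter ℕ) (hfree : (U : Filter ℕ) ≤ Filter.cofinite)
    (μ : ℕ → (Option ℕ →₀ ℝ))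
    (hK : ∀ S : Set ℕ, Tendsto (fun n => sval (μ n) S +
      (if S ∈ (U : Filter ℕ) then μ n none else 0)) atTop (nhds 0)) :
    Tendsto (fun n => ∑ j ∈ ssupp (μ n), |μ n (some j)|) atTop (nhds 0) := by
  have hsing : ∀ j : ℕ, ({j} : Set ℕ) ∉ (U : Filter ℕ) := by
    intro j hj
    have h2 : ({j} : Set ℕ)ᶜ ∈ (U : Filter ℕ) :=
      hfree ((Set.finite_singleton j).compl_mem_cofinite)
    have := Filter.inter_mem hj h2
    rw [Set.inter_compl_self] at this
    exact Filter.empty_notMem _ this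
  have hpt : ∀ j, Tendsto (fun n => |μ n (some j)|) atTop (nhds 0) := by
    intro j
    have h1 := hK {j}
    simp only [if_neg (hsing j), add_zero, sval_singleton] at h1
    simpa using h1.abs
  have hfin : ∀ G : Finset ℕ, Tendsto (fun n => ∑ j ∈ G, |μ n (some j)|) atTop (nhds 0) := by
    intro G
    have := tendsto_finset_sum G (fun j _ => hpt j)
    simpa using this
  by_contra hcon
  rw [Metric.tendsto_atTop] at hcon
  push_neg at hcon
  obtain ⟨ε, hε, hfreq⟩ := hcon
  have hfreq' : ∀ N, ∃ n, N ≤ n ∧ ε ≤ ∑ j ∈ ssupp (μ n), |μ n (some j)| := by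
    intro N; obtain ⟨n, hn, hd⟩ := hfreq N
    refine ⟨n, hn, ?_⟩
    rwa [Real.dist_eq, sub_zero,
      abs_of_nonneg (Finset.sum_nonneg fun _ _ => abs_nonneg _)] at hd
  set P : ℕ → Finset ℕ → Prop := fun n G =>
    ε ≤ ∑ j ∈ ssupp (μ n), |μ n (some j)| ∧ ∑ j ∈ G, |μ n (some j)| ≤ ε/8 with hPdef
  have H : ∀ (G : Finset ℕ) (N : ℕ), ∃ n, N ≤ n ∧ P n G := by
    intro G N
    have h8 : (0:ℝ) < ε/8 := by linarith
    obtain ⟨N₀, hN₀⟩ := (Metric.tendsto_atTop.mp (hfin G)) (ε/8) h8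
    obtain ⟨n, hn, htv⟩ := hfreq' (max N N₀)
    refine ⟨n, le_trans (le_max_left _ _) hn, htv, ?_⟩
    have := hN₀ n (le_trans (le_max_right _ _) hn)
    rw [Real.dist_eq, sub_zero,
      abs_of_nonneg (Finset.sum_nonneg fun _ _ => abs_nonneg _)] at this
    linarith
  set s : ℕ → Finset ℕ := fun n => ssupp (μ n) with hs
  set m : ℕ → ℕ := fun k => (chain s P H k).1 with hm
  set Fk : ℕ → Finset ℕ := fun k => (chain s P H k).2 with hFk
  have hPk : ∀ k, P (m (k+1)) (Fk k) := fun k => chain_P s P H k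
  have hmono : ∀ {a b : ℕ}, a ≤ b → Fk a ⊆ Fk b := fun hab =>
    chain_F_mono s P H hab
  have hsubF : ∀ k, ssupp (μ (m k)) ⊆ Fk k := fun k => chain_supp_subset s P H k
  have hmlt : StrictMono m := chain_strictMono s P H
  set E : ℕ → Finset ℕ := fun k => ssupp (μ (m (k+1))) \ Fk k with hE
  have hEsub : ∀ k, E k ⊆ ssupp (μ (m (k+1))) := fun k => Finset.sdiff_subset
  have hEsum : ∀ k, ε - ε/8 ≤ ∑ j ∈ E k, |μ (m (k+1)) (some j)| := by
    intro k
    have hsplit := Finset.sum_filter_add_sum_filter_not (ssupp (μ (m (k+1))))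
      (· ∈ Fk k) (fun j => |μ (m (k+1)) (some j)|)
    have h1 : ∑ j ∈ (ssupp (μ (m (k+1)))).filter (· ∈ Fk k), |μ (m (k+1)) (some j)| ≤ ε/8 :=
      le_trans (Finset.sum_le_sum_of_subset_of_nonneg
        (fun x hx => (Finset.mem_filter.mp hx).2) (fun _ _ _ => abs_nonneg _)) (hPk k).2
    have h2 : (ssupp (μ (m (k+1)))).filter (fun x => ¬ x ∈ Fk k) = E k := by
      rw [hE]; ext x; simp [Finset.mem_sdiff, Finset.mem_filter]
    rw [h2] at hsplit
    have h3 := (hPk k).1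
    linarith
  set Q : ℕ → Finset ℕ := fun k =>
    if 7*ε/16 ≤ ∑ j ∈ (E k).filter (fun j => 0 < μ (m (k+1)) (some j)), μ (m (k+1)) (some j)
    then (E k).filter (fun j => 0 < μ (m (k+1)) (some j))
    else (E k).filter (fun j => ¬ 0 < μ (m (k+1)) (some j)) with hQ
  have hQsub : ∀ k, Q k ⊆ E k := by
    intro k; simp only [hQ]
    split_ifs <;> exact Finset.filter_subset _ _
  have hQbig : ∀ k, 7*ε/16 ≤ |∑ j ∈ Q k, μ (m (k+1)) (some j)| := by
    intro k
    have hsplit := Finset.sum_filter_add_sum_filter_not (E k) (fun j => 0 < μ (m (k+1)) (some j))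
      (fun j => |μ (m (k+1)) (some j)|)
    have hpos : ∑ j ∈ (E k).filter (fun j => 0 < μ (m (k+1)) (some j)), |μ (m (k+1)) (some j)|
        = ∑ j ∈ (E k).filter (fun j => 0 < μ (m (k+1)) (some j)), μ (m (k+1)) (some j) :=
      Finset.sum_congr rfl fun j hj => abs_of_pos (Finset.mem_filter.mp hj).2
    have hneg : ∑ j ∈ (E k).filter (fun j => ¬ 0 < μ (m (k+1)) (some j)), |μ (m (k+1)) (some j)|
        = -∑ j ∈ (E k).filter (fun j => ¬ 0 < μ (m (k+1)) (some j)), μ (m (k+1)) (some j) := by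
      rw [← Finset.sum_neg_distrib]
      exact Finset.sum_congr rfl fun j hj =>
        abs_of_nonpos (not_lt.mp (Finset.mem_filter.mp hj).2)
    have hEk := hEsum k
    rw [hpos, hneg] at hsplit
    simp only [hQ]
    split_ifs with h
    · exact le_trans h (le_abs_self _)
    · push_neg at h
      have h2 : 7*ε/16 ≤ -∑ j ∈ (E k).filter (fun j => ¬ 0 < μ (m (k+1)) (some j)), μ (m (k+1)) (some j) := by linarith
      exact le_trans h2 (neg_le_abs _)
  set Sb : ℕ → Set ℕ := fun b => {j | ∃ k, k % 2 = b ∧ j ∈ Q k} with hSb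
  have hQdisj : ∀ k k', k < k' → ∀ j, j ∈ Q k' → j ∉ ssupp (μ (m (k+1))) := by
    intro k k' hkk' j hj hsupp
    have h1 : j ∈ E k' := hQsub k' hj
    have h2 : j ∉ Fk k' := (Finset.mem_sdiff.mp h1).2
    exact h2 (hmono (Nat.succ_le_of_lt hkk') (hsubF (k+1) hsupp))
  have hSdisj : ∃ b, b < 2 ∧ Sb b ∉ (U : Filter ℕ) := by
    by_contra hboth
    push_neg at hboth
    have h0 : Sb 0 ∈ (U : Filter ℕ) := hboth 0 (by norm_num)
    have h1 : Sb 1 ∈ (U : Filter ℕ) := hboth 1 (by norm_num)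
    have hint := Filter.inter_mem h0 h1
    have hemp : Sb 0 ∩ Sb 1 = ∅ := by
      ext j; simp only [Set.mem_inter_iff, Set.mem_empty_iff_false, iff_false, not_and]
      rintro ⟨k0, hk0, hj0⟩ ⟨k1, hk1, hj1⟩
      have hne : k0 ≠ k1 := by omega
      rcases lt_or_gt_of_ne hne with h | h
      · exact hQdisj k0 k1 h j hj1 (hEsub k0 (hQsub k0 hj0))
      · exact hQdisj k1 k0 h j hj0 (hEsub k1 (hQsub k1 hj1))
    rw [hemp] at hint
    exact Filter.empty_notMem _ hint
  obtain ⟨b, hb2, hbU⟩ := hSdisj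
  have htS : Tendsto (fun n => sval (μ n) (Sb b)) atTop (nhds 0) := by
    have := hK (Sb b)
    simpa only [if_neg hbU, add_zero] using this
  have h5 : (0:ℝ) < 5*ε/16 := by linarith
  obtain ⟨N, hN⟩ := Metric.tendsto_atTop.mp htS (5*ε/16) h5
  set k := 2*N + b with hk
  have hkb : k % 2 = b := by omega
  have hmN : N ≤ m (k+1) := le_trans (by omega) hmlt.le_apply
  have hdist := hN (m (k+1)) hmN
  rw [Real.dist_eq, sub_zero] at hdist
  set n := m (k+1) with hn
  set T := (ssupp (μ n)).filter (· ∈ Sb b) with hT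
  have hQT : Q k ⊆ T := by
    intro j hj
    rw [hT, Finset.mem_filter]
    exact ⟨hEsub k (hQsub k hj), ⟨k, hkb, hj⟩⟩
  have hTQ : T \ Q k ⊆ Fk k := by
    intro j hj
    obtain ⟨hjT, hjQ⟩ := Finset.mem_sdiff.mp hj
    obtain ⟨hjs, hjS⟩ := Finset.mem_filter.mp hjT
    obtain ⟨k', hk', hjk'⟩ := hjS
    have hne : k' ≠ k := fun h => hjQ (h ▸ hjk')
    rcases lt_or_gt_of_ne hne with h | h
    · exact hmono (Nat.succ_le_of_lt h) (hsubF (k'+1) (hEsub k' (hQsub k' hjk')))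
    · exact absurd hjs (hQdisj k k' h j hjk')
  have hsum : sval (μ n) (Sb b)
      = ∑ j ∈ T \ Q k, μ n (some j) + ∑ j ∈ Q k, μ n (some j) :=
    (Finset.sum_sdiff hQT).symm
  have hsmall : |∑ j ∈ T \ Q k, μ n (some j)| ≤ ε/8 :=
    le_trans (Finset.abs_sum_le_sum_abs _ _)
      (le_trans (Finset.sum_le_sum_of_subset_of_nonneg hTQ (fun _ _ _ => abs_nonneg _))
        (hPk k).2)
  have hbig := hQbig k
  have hlow : 5*ε/16 ≤ |sval (μ n) (Sb b)| := by
    rw [hsum]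
    have h3 : |∑ j ∈ Q k, μ n (some j)|
        ≤ |∑ j ∈ T \ Q k, μ n (some j) + ∑ j ∈ Q k, μ n (some j)|
          + |∑ j ∈ T \ Q k, μ n (some j)| := by
      have := abs_sub (∑ j ∈ T \ Q k, μ n (some j) + ∑ j ∈ Q k, μ n (some j))
        (∑ j ∈ T \ Q k, μ n (some j))
      simpa using this
    linarith
  linarith

/-- If `F` is a free ultrafilter on `ω`, then `N_F` does not have the BJNP. -/
theorem stmt13 (U : Ultrafilter ℕ) (hfree : (U : Filter ℕ) ≤ Filter.cofinite) :
    ¬ BJNP (NFtop (U : Filter ℕ)) := by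
  rintro ⟨μ, hnorm, htend⟩
  have hK := key1 U μ htend
  have htv := tv_tendsto U hfree μ hK
  have huniv := hK Set.univ
  simp only [if_pos (Filter.univ_mem : (Set.univ : Set ℕ) ∈ (U : Filter ℕ))] at huniv
  have hsv : Tendsto (fun n => sval (μ n) Set.univ) atTop (nhds 0) :=
    squeeze_zero_norm (fun n => by
      simpa [Real.norm_eq_abs] using abs_sval_le (μ n) Set.univ) htv
  have ha : Tendsto (fun n => μ n none) atTop (nhds 0) := by
    have := huniv.sub hsv
    simpa using this
  have h1 : Tendsto (fun n => |μ n none|) atTop (nhds 0) := by simpa using ha.abs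
  have hnorm0 : Tendsto (fun n => mnorm (μ n)) atTop (nhds 0) := by
    have heq : (fun n => mnorm (μ n))
        = fun n => |μ n none| + ∑ j ∈ ssupp (μ n), |μ n (some j)| :=
      funext fun n => mnorm_eq (μ n)
    rw [heq]
    simpa using h1.add htv
  have hone : Tendsto (fun _ : ℕ => (1:ℝ)) atTop (nhds 0) := by
    simpa only [hnorm] using hnorm0
  have := tendsto_nhds_unique hone tendsto_const_nhds
  norm_num at this
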